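/- For each natural number k ≥ 2, consider the commutative semigroup S = {0,1,...,k-1} ∪ (kℕ+1) with addition modulo k, colored by assigning to each a in S the color a mod k. Then for any sequence of distinct elements a_1, a_2, ... of S, the set of finite sums of distinct elements of the sequence attains all k colors. -/

import Mathlib

/-- The iterated sum `a₁ + a₂ + ⋯ + a_m` in the semigroup
`S = {0,…,k-1} ∪ (kℕ+1)` whose operation is `(a, b) ↦ (a + b) % k`:
a singleton list evaluates to its unique entry, and longer lists are
evaluated by folding the operation. -/
def modSum (k : ℕ) : List ℕ → ℕ
  | [] => 0
  | [a] => a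
  | a :: l => (a + modSum k l) % k

lemma modSum_mod (k : ℕ) : ∀ l : List ℕ, l ≠ [] → modSum k l % k = l.sum % k
  | [a], _ => by simp [modSum]
  | a :: b :: l, _ => by
      have ih := modSum_mod k (b :: l) (by simp)
      show (a + modSum k (b :: l)) % k % k = (a + (b :: l).sum) % k
      rw [Nat.mod_mod_of_dvd _ dvd_rfl, Nat.add_mod, ih, ← Nat.add_mod]

lemma sum_mod_ones (k : ℕ) (l : List ℕ) (h : ∀ x ∈ l, x % k = 1) :
    l.sum % k = l.length % k := by
  induction l with
  | nil => simp
  | cons a l ih =>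
    simp only [List.sum_cons, List.length_cons]
    rw [Nat.add_mod, h a (by simp), ih (fun x hx => h x (by simp [hx])),
      Nat.add_comm, Nat.mod_add_mod]

/-- Example: in the commutative semigroup `S = {0,1,…,k-1} ∪ (kℕ+1)` with addition
modulo `k` (`k ≥ 2`), colored by `a ↦ a % k`, every sequence of distinct elements of
`S` has finite sums of distinct elements attaining all `k` colors. -/
theorem all_colors_attained (k : ℕ) (hk : 2 ≤ k) (a : ℕ → ℕ)
    (ha : ∀ n, a n ∈ {m : ℕ | m < k ∨ m % k = 1})
    (hinj : Function.Injective a) :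
    ∀ c < k, ∃ l : List ℕ, l ≠ [] ∧ l.Pairwise (· < ·) ∧
      modSum k (l.map a) % k = c := by
  intro c hc
  have hfin : (a ⁻¹' Set.Iio k).Finite :=
    Set.Finite.preimage hinj.injOn (Set.finite_Iio k)
  have hT : {n | a n % k = 1}.Infinite := by
    refine Set.Infinite.mono ?_ hfin.infinite_compl
    intro n hn
    rcases ha n with h | h
    · exact absurd h hn
    · exact h
  set p : ℕ → Prop := fun n => a n % k = 1 with hp
  have hTp : (setOf p).Infinite := hT
  set m : ℕ := if c = 0 then k else c with hm
  have hm1 : 1 ≤ m := by rw [hm]; split <;> omega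
  have hmk : m % k = c := by
    rcases Nat.eq_zero_or_pos c with h | h
    · simp [hm, h]
    · have : m = c := by simp [hm]; omega
      rw [this, Nat.mod_eq_of_lt hc]
  refine ⟨(List.range m).map (Nat.nth p), ?_, ?_, ?_⟩
  · simp; omega
  · refine List.Pairwise.map _ (fun x y hxy => ?_) List.pairwise_lt_range
    exact (Nat.nth_lt_nth hTp).mpr hxy
  · rw [modSum_mod k _ (by simp; omega), sum_mod_ones k _ ?_]
    · simp [hmk]
    · intro x hx
      simp only [List.map_map, List.mem_map, List.mem_range] at hx
      obtain ⟨i, _, rfl⟩ := hx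
      exact Nat.nth_mem_of_infinite hTp i
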